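/- Let |ψ⟩ be a pure n-qubit state with stabilizer group G, and let h₀ = 𝟙, h₁, …, h_k be Hermitian Pauli operators with Tr(h_i ψ) ≠ 0 lying in pairwise distinct cosets of G (with h_iG ≠ −h_jG for i ≠ j) such that every Hermitian Pauli P with Tr(Pψ) ≠ 0 belongs to h_iG or −h_iG for some i. Fix a bipartition A|B. Then the 2-Rényi entanglement entropy satisfies S₂(ψ_A) = (n_A − |S_A|) − log₂( Σ_{i=0}^{k} δ_i · Tr(h_i ψ)² ), where δ_i ∈ {0,1} equals 1 if and only if there exists P ∈ G such that h_i·P acts as the identity on the B qubits (i.e., h_iP = Q_A ⊗ 𝟙_B for some matrix Q_A on the A qubits), with δ₀ = 1 by convention. -/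

import Mathlib

open scoped Matrix ComplexOrder ENNReal Classical

noncomputable section

abbrev QVec (n : ℕ) := (Fin n → Fin 2) → ℂ
abbrev QMat (n : ℕ) := Matrix (Fin n → Fin 2) (Fin n → Fin 2) ℂ

/-- `ψ` is a unit vector (a pure state). -/
def IsUnitVec {n : ℕ} (ψ : QVec n) : Prop := ∑ x, Complex.normSq (ψ x) = 1

/-- The ℓ² norm of a vector. -/
def vnorm {n : ℕ} (v : QVec n) : ℝ := Real.sqrt (∑ x, Complex.normSq (v x))

/-- The density matrix `|ψ⟩⟨ψ|`. -/
def dm {n : ℕ} (ψ : QVec n) : QMat n := Matrix.vecMulVec ψ (star ψ)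

/-- The four single-qubit Pauli matrices I, X, Y, Z. -/
def pauli1 : Fin 4 → Matrix (Fin 2) (Fin 2) ℂ :=
  ![1, !![0, 1; 1, 0], !![0, -Complex.I; Complex.I, 0], !![1, 0; 0, -1]]

/-- The `n`-qubit Pauli operator `P₁ ⊗ ⋯ ⊗ P_n` given by a string `p`. -/
def pauliOp {n : ℕ} (p : Fin n → Fin 4) : QMat n :=
  fun x y => ∏ j, pauli1 (p j) (x j) (y j)

/-- The `n`-qubit Pauli group: matrices `i^a · P₁ ⊗ ⋯ ⊗ P_n`. -/
def PauliGroup (n : ℕ) : Set (QMat n) :=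
  {M | ∃ (a : Fin 4) (p : Fin n → Fin 4), M = Complex.I ^ (a : ℕ) • pauliOp p}

/-- A Hermitian Pauli operator: `± P₁ ⊗ ⋯ ⊗ P_n`. -/
def IsHermPauli {n : ℕ} (M : QMat n) : Prop :=
  ∃ (s : ℂ) (p : Fin n → Fin 4), (s = 1 ∨ s = -1) ∧ M = s • pauliOp p

/-- The stabilizer group `G = {P ∈ 𝒫_n : P|ψ⟩ = |ψ⟩}` of a pure state. -/
def stabGroup {n : ℕ} (ψ : QVec n) : Set (QMat n) :=
  {P | P ∈ PauliGroup n ∧ P.mulVec ψ = ψ}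

/-- `M` is supported on the qubits in `A` (acts as the identity on the rest),
i.e. `M = f_A ⊗ 𝟙` for some matrix `f` on the `A` qubits. -/
def MatSupportedOn {n : ℕ} (A : Finset (Fin n)) (M : QMat n) : Prop :=
  ∃ f : ({j // j ∈ A} → Fin 2) → ({j // j ∈ A} → Fin 2) → ℂ,
    ∀ x y, M x y =
      if ∀ j ∉ A, x j = y j then f (fun j => x j.1) (fun j => y j.1) else 0

/-- The local stabilizer subgroup `G_A`: stabilizers acting as the identity outside `A`. -/
def localStab {n : ℕ} (ψ : QVec n) (A : Finset (Fin n)) : Set (QMat n) :=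
  {P | P ∈ stabGroup ψ ∧ MatSupportedOn A P}

/-- `log₂` of the cardinality of a set. -/
def logCard {α : Type*} (S : Set α) : ℝ := Real.logb 2 S.ncard

/-- The stabilizer entanglement `ℰ(ψ; A|B) = (|S| − |S_A| − |S_B|)/2` (with `B = Aᶜ`). -/
def stabEnt {n : ℕ} (ψ : QVec n) (A : Finset (Fin n)) : ℝ :=
  (logCard (stabGroup ψ) - logCard (localStab ψ A) - logCard (localStab ψ Aᶜ)) / 2

/-- Combine an assignment on `A` and on `Aᶜ` into one on all qubits. -/
def mergeFn {n : ℕ} (A : Finset (Fin n)) (x : {j // j ∈ A} → Fin 2)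
    (z : {j // j ∈ Aᶜ} → Fin 2) : Fin n → Fin 2 :=
  fun j => if h : j ∈ A then x ⟨j, h⟩ else z ⟨j, Finset.mem_compl.mpr h⟩

/-- The reduced density matrix `ψ_A = Tr_{Aᶜ} |ψ⟩⟨ψ|`. -/
def reducedDM {n : ℕ} (A : Finset (Fin n)) (ψ : QVec n) :
    Matrix ({j // j ∈ A} → Fin 2) ({j // j ∈ A} → Fin 2) ℂ :=
  fun x y => ∑ z : {j // j ∈ Aᶜ} → Fin 2, ψ (mergeFn A x z) * star (ψ (mergeFn A y z))

/-- The α-Rényi entropy (base 2) of a Hermitian matrix, defined through its eigenvalues: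
`S₀ = log₂ rank`, `S₁` the von Neumann entropy, `S_∞ = −log₂` (largest eigenvalue, which is
the operator norm for positive semidefinite matrices), and
`S_α = (1−α)⁻¹ log₂ Σ λ_i^α` otherwise. -/
def renyi {m : Type*} [Fintype m] [DecidableEq m] (α : ℝ≥0∞)
    (ρ : Matrix m m ℂ) : ℝ :=
  if h : ρ.IsHermitian then
    if α = 0 then Real.logb 2 (ρ.rank : ℝ)
    else if α = 1 then -∑ i, h.eigenvalues i * Real.logb 2 (h.eigenvalues i)
    else if α = ⊤ then -Real.logb 2 (⨆ i, h.eigenvalues i)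
    else (1 / (1 - α.toReal)) * Real.logb 2 (∑ i, h.eigenvalues i ^ α.toReal)
  else 0

def IsUnitary {n : ℕ} (U : QMat n) : Prop := U * Uᴴ = 1 ∧ Uᴴ * U = 1

/-- A Clifford unitary: a unitary whose conjugation action maps the Pauli group onto itself. -/
def IsClifford {n : ℕ} (U : QMat n) : Prop :=
  IsUnitary U ∧ (fun P => U * P * Uᴴ) '' PauliGroup n = PauliGroup n

/-- Amplitudes of the Bell pair `|φ₊⟩ = (|00⟩+|11⟩)/√2`. -/
def bellAmp (a b : Fin 2) : ℂ := if a = b then ((Real.sqrt 2 : ℝ) : ℂ)⁻¹ else 0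

/-- Trace out the last `m` qubits of a pure state on `n + m` qubits. -/
def traceOutLast {n m : ℕ} (Ψ : QVec (n + m)) : QMat n :=
  fun x y => ∑ z : Fin m → Fin 2,
    Ψ (Fin.append x z) * star (Ψ (Fin.append y z))

/-- `Tr √ρ` for a positive semidefinite matrix (junk value `0` otherwise). -/
def sqrtTrace {m : Type*} [Fintype m] [DecidableEq m] (ρ : Matrix m m ℂ) : ℝ :=
  if h : ρ.PosSemidef then
    ((h.1.eigenvectorUnitary : Matrix m m ℂ) * Matrix.diagonal (((↑) : ℝ → ℂ) ∘ Real.sqrt ∘ h.1.eigenvalues) *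
      (star h.1.eigenvectorUnitary : Matrix m m ℂ)).trace.re
  else 0

/-- `S_{1/2}(ψ_A) = 2 log₂ Tr √ψ_A`. -/
def sHalf {n : ℕ} (A : Finset (Fin n)) (ψ : QVec n) : ℝ :=
  2 * Real.logb 2 (sqrtTrace (reducedDM A ψ))

/-- The set `SEP^{(E)}(A;B)`: convex hull of pure states with `S_{1/2}` entanglement ≤ E. -/
def SEPE {n : ℕ} (A : Finset (Fin n)) (E : ℝ) : Set (QMat n) :=
  convexHull ℝ {ρ | ∃ ψ : QVec n, IsUnitVec ψ ∧ sHalf A ψ ≤ E ∧ ρ = dm ψ}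

/-- `ψ` is a product state across the bipartition `A | Aᶜ`. -/
def IsProdAcross {n : ℕ} (A : Finset (Fin n)) (ψ : QVec n) : Prop :=
  ∃ (f : ({j // j ∈ A} → Fin 2) → ℂ) (g : ({j // j ∈ Aᶜ} → Fin 2) → ℂ),
    ∀ x, ψ x = f (fun j => x j.1) * g (fun j => x j.1)

/-- The separable states across `A | Aᶜ`. -/
def SEPset {n : ℕ} (A : Finset (Fin n)) : Set (QMat n) :=
  convexHull ℝ {ρ | ∃ ψ : QVec n, IsUnitVec ψ ∧ IsProdAcross A ψ ∧ ρ = dm ψ}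

/-- The trace norm `‖X‖₁ = Tr √(XᴴX)` (sum of singular values). -/
def traceNorm {m : Type*} [Fintype m] [DecidableEq m] (X : Matrix m m ℂ) : ℝ :=
  sqrtTrace (Xᴴ * X)

end

noncomputable section
namespace St3

/-- multiplication table of Pauli indices -/
def pm : Fin 4 → Fin 4 → Fin 4 := fun a b =>
  ![![0,1,2,3],![1,0,3,2],![2,3,0,1],![3,2,1,0]] a b

/-- phase exponent table: pauli1 a * pauli1 b = I ^ pe a b • pauli1 (pm a b) -/
def pe : Fin 4 → Fin 4 → ℕ := fun a b =>
  ![![0,0,0,0],![0,0,1,3],![0,3,0,1],![0,1,3,0]] a b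

lemma pauli1_mul (a b : Fin 4) :
    pauli1 a * pauli1 b = Complex.I ^ (pe a b) • pauli1 (pm a b) := by
  fin_cases a <;> fin_cases b <;>
    · ext i j
      fin_cases i <;> fin_cases j <;>
        (simp [pauli1, pm, pe, Matrix.mul_apply, Fin.sum_univ_two,
            Matrix.vecHead, Matrix.vecTail, pow_succ, Complex.ext_iff] <;> norm_num)

lemma pm_self (a : Fin 4) : pm a a = 0 := by fin_cases a <;> rfl
lemma pe_self (a : Fin 4) : pe a a = 0 := by fin_cases a <;> rfl
lemma pm_zero_right (a : Fin 4) : pm a 0 = a := by fin_cases a <;> rfl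
lemma pm_eq_zero_iff (a b : Fin 4) : pm a b = 0 ↔ a = b := by
  fin_cases a <;> fin_cases b <;> simp [pm]

lemma pauli1_star (a : Fin 4) (u w : Fin 2) :
    star (pauli1 a u w) = pauli1 a w u := by
  fin_cases a <;> fin_cases u <;> fin_cases w <;>
    simp [pauli1, Complex.ext_iff]

lemma pauli1_trace_one (a : Fin 4) :
    ∑ u : Fin 2, pauli1 a u u = if a = 0 then 2 else 0 := by
  fin_cases a <;> (simp [pauli1, Fin.sum_univ_two] <;> norm_num)

lemma pauli1_complete (s t s' t' : Fin 2) :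
    ∑ a : Fin 4, pauli1 a s t * pauli1 a t' s' =
      if s = s' ∧ t = t' then 2 else 0 := by
  fin_cases s <;> fin_cases t <;> fin_cases s' <;> fin_cases t' <;>
    (simp [pauli1, Fin.sum_univ_four, Complex.ext_iff] <;> norm_num)

variable {n : ℕ}

lemma pauliOp_apply (p : Fin n → Fin 4) (x y : Fin n → Fin 2) :
    pauliOp p x y = ∏ j, pauli1 (p j) (x j) (y j) := rfl

lemma pauliOp_zero : pauliOp (fun _ : Fin n => (0 : Fin 4)) = 1 := by
  ext x y
  simp only [pauliOp, pauli1]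
  by_cases h : x = y
  · subst h
    simp [Matrix.one_apply]
  · have : ∃ j, x j ≠ y j := by
      by_contra hc
      push_neg at hc
      exact h (funext hc)
    obtain ⟨j, hj⟩ := this
    rw [Matrix.one_apply_ne h]
    exact Finset.prod_eq_zero (Finset.mem_univ j) (by simp [Matrix.one_apply, hj])

lemma pauliOp_mul (p q : Fin n → Fin 4) :
    pauliOp p * pauliOp q =
      Complex.I ^ (∑ j, pe (p j) (q j)) • pauliOp (fun j => pm (p j) (q j)) := by
  ext x y
  rw [Matrix.mul_apply]
  have key : ∀ z : Fin n → Fin 2,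
      pauliOp p x z * pauliOp q z y
        = ∏ j, (pauli1 (p j) (x j) (z j) * pauli1 (q j) (z j) (y j)) := by
    intro z
    rw [pauliOp_apply, pauliOp_apply, ← Finset.prod_mul_distrib]
  simp only [key]
  have := Finset.prod_univ_sum (fun _ : Fin n => (Finset.univ : Finset (Fin 2)))
    (fun j c => pauli1 (p j) (x j) c * pauli1 (q j) c (y j))
  rw [show (Fintype.piFinset fun _ : Fin n => (Finset.univ : Finset (Fin 2)))
      = Finset.univ by simp] at this
  rw [← this]
  have step : ∀ j : Fin n, ∑ c : Fin 2, pauli1 (p j) (x j) c * pauli1 (q j) c (y j)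
      = Complex.I ^ (pe (p j) (q j)) * pauli1 (pm (p j) (q j)) (x j) (y j) := by
    intro j
    have := congrFun (congrFun (pauli1_mul (p j) (q j)) (x j)) (y j)
    rw [Matrix.mul_apply] at this
    simpa [Fin.sum_univ_two] using this
  rw [Finset.prod_congr rfl (fun j _ => step j), Finset.prod_mul_distrib,
    Finset.prod_pow_eq_pow_sum]
  simp [pauliOp_apply, Matrix.smul_apply]

lemma pauliOp_sq (p : Fin n → Fin 4) : pauliOp p * pauliOp p = 1 := by
  rw [pauliOp_mul]
  simp [pe_self, pm_self, pauliOp_zero]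

lemma pauliOp_conjTranspose (p : Fin n → Fin 4) : (pauliOp p)ᴴ = pauliOp p := by
  ext x y
  simp only [Matrix.conjTranspose_apply, pauliOp_apply, star_prod, pauli1_star]

lemma trace_pauliOp (p : Fin n → Fin 4) :
    Matrix.trace (pauliOp p) = if (∀ j, p j = 0) then (2 : ℂ) ^ n else 0 := by
  rw [Matrix.trace]
  have : ∀ x : Fin n → Fin 2, Matrix.diag (pauliOp p) x
      = ∏ j, pauli1 (p j) (x j) (x j) := fun x => rfl
  simp only [this]
  have := Finset.prod_univ_sum (fun _ : Fin n => (Finset.univ : Finset (Fin 2)))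
    (fun j c => pauli1 (p j) c c)
  rw [show (Fintype.piFinset fun _ : Fin n => (Finset.univ : Finset (Fin 2)))
      = Finset.univ by simp] at this
  rw [← this, Finset.prod_congr rfl (fun j _ => pauli1_trace_one (p j))]
  by_cases h : ∀ j, p j = 0
  · simp [h, Finset.prod_const]
  · rw [if_neg h]
    push_neg at h
    obtain ⟨j, hj⟩ := h
    exact Finset.prod_eq_zero (Finset.mem_univ j) (by simp [hj])

lemma trace_pauliOp_mul (p q : Fin n → Fin 4) :
    Matrix.trace (pauliOp p * pauliOp q) = if p = q then (2 : ℂ) ^ n else 0 := by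
  rw [pauliOp_mul, Matrix.trace_smul, trace_pauliOp]
  by_cases h : p = q
  · subst h
    simp [pm_self, pe_self]
  · have : ¬ ∀ j, pm (p j) (q j) = 0 := by
      intro hc
      exact h (funext fun j => (pm_eq_zero_iff (p j) (q j)).mp (hc j))
    simp [this, h]

lemma smul_pauliOp_inj {c d : ℂ} {p q : Fin n → Fin 4} (hc : c ≠ 0)
    (hcd : c • pauliOp p = d • pauliOp q) : p = q ∧ c = d := by
  have h1 : Matrix.trace ((c • pauliOp p) * pauliOp p)
      = Matrix.trace ((d • pauliOp q) * pauliOp p) := by rw [hcd]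
  rw [Matrix.smul_mul, Matrix.smul_mul, Matrix.trace_smul, Matrix.trace_smul,
    trace_pauliOp_mul, trace_pauliOp_mul] at h1
  have h2 : (2:ℂ)^n ≠ 0 := pow_ne_zero _ two_ne_zero
  by_cases h : q = p
  · subst h
    rw [smul_eq_mul, smul_eq_mul, if_pos rfl] at h1
    exact ⟨rfl, mul_right_cancel₀ h2 h1⟩
  · rw [if_neg h, if_pos rfl, smul_eq_mul, smul_zero] at h1
    exact absurd (by
      rcases mul_eq_zero.mp h1 with h3 | h3
      · exact h3
      · exact absurd h3 h2) hc

lemma pauliOp_ne_zero (p : Fin n → Fin 4) : pauliOp p ≠ 0 := by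
  intro hc
  have := trace_pauliOp_mul p p
  rw [hc] at this
  simp at this
  exact pow_ne_zero n (two_ne_zero (α := ℂ)) this.symm

lemma I_pow_mod (c : ℕ) : Complex.I ^ c = Complex.I ^ (c % 4) := by
  conv_lhs => rw [← Nat.div_add_mod c 4]
  rw [pow_add, pow_mul]
  simp [Complex.I_pow_four]

lemma phase_smul_mem_pauliGroup (c : ℕ) (p : Fin n → Fin 4) :
    (Complex.I ^ c • pauliOp p) ∈ PauliGroup n := by
  refine ⟨⟨c % 4, by omega⟩, p, ?_⟩
  rw [I_pow_mod]

lemma exists_ne_zero_of_unit {ψ : QVec n} (hψ : IsUnitVec ψ) : ∃ x, ψ x ≠ 0 := by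
  by_contra hc
  push_neg at hc
  rw [IsUnitVec] at hψ
  simp [hc] at hψ

lemma dm_conjTranspose (ψ : QVec n) : (dm ψ)ᴴ = dm ψ := by
  ext x y
  simp [dm, Matrix.vecMulVec_apply, mul_comm]

lemma mul_dm_of_stab {ψ : QVec n} {Q : QMat n} (hQ : Q ∈ stabGroup ψ) :
    Q * dm ψ = dm ψ := by
  ext x y
  rw [Matrix.mul_apply]
  simp only [dm, Matrix.vecMulVec_apply, ← mul_assoc]
  rw [← Finset.sum_mul]
  congr 1
  have := congrFun hQ.2 x
  simpa [Matrix.mulVec, dotProduct] using this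

lemma star_trace_mul_dm {ψ : QVec n} {M : QMat n} (hM : Mᴴ = M) :
    star (Matrix.trace (M * dm ψ)) = Matrix.trace (M * dm ψ) := by
  rw [← Matrix.trace_conjTranspose, Matrix.conjTranspose_mul, dm_conjTranspose, hM,
    Matrix.trace_mul_comm]

lemma trace_mul_dm_real {ψ : QVec n} {M : QMat n} (hM : Mᴴ = M) :
    Matrix.trace (M * dm ψ) = ((Matrix.trace (M * dm ψ)).re : ℂ) :=
  (Complex.conj_eq_iff_re.mp (star_trace_mul_dm hM)).symm

lemma hermPauli_conjTranspose {M : QMat n} (hM : IsHermPauli M) : Mᴴ = M := by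
  obtain ⟨s, p, hs, rfl⟩ := hM
  rw [Matrix.conjTranspose_smul, pauliOp_conjTranspose]
  rcases hs with rfl | rfl <;> simp

lemma stab_form {ψ : QVec n} (hψ : IsUnitVec ψ) {P : QMat n} (hP : P ∈ stabGroup ψ) :
    ∃ p, P = pauliOp p ∨ P = -pauliOp p := by
  obtain ⟨⟨a, p, hPf⟩, hv⟩ := hP
  obtain ⟨x₀, hx₀⟩ := exists_ne_zero_of_unit hψ
  have hPP : P * P = (Complex.I ^ (a:ℕ) * Complex.I ^ (a:ℕ)) • (1 : QMat n) := by
    rw [hPf, Matrix.smul_mul, Matrix.mul_smul, pauliOp_sq, smul_smul]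
  have hv2 : (P * P).mulVec ψ = ψ := by
    rw [← Matrix.mulVec_mulVec, hv, hv]
  rw [hPP] at hv2
  have hc1 : (Complex.I ^ (a:ℕ) * Complex.I ^ (a:ℕ)) = 1 := by
    have := congrFun hv2 x₀
    rw [Matrix.smul_mulVec, Matrix.one_mulVec] at this
    have h3 : (Complex.I ^ (a:ℕ) * Complex.I ^ (a:ℕ)) * ψ x₀ = 1 * ψ x₀ := by
      rw [one_mul]; exact this
    exact mul_right_cancel₀ hx₀ h3
  refine ⟨p, ?_⟩
  fin_cases a
  · left; rw [hPf]; simp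
  · exfalso
    rw [← pow_add] at hc1
    norm_num [Complex.ext_iff, pow_succ, Complex.I_sq] at hc1
  · right; rw [hPf]
    norm_num [pow_succ, Complex.I_sq]
  · exfalso
    rw [← pow_add] at hc1
    norm_num [Complex.ext_iff, pow_succ, Complex.I_sq] at hc1

lemma stab_sq {ψ : QVec n} (hψ : IsUnitVec ψ) {P : QMat n} (hP : P ∈ stabGroup ψ) :
    P * P = 1 := by
  obtain ⟨p, hp | hp⟩ := stab_form hψ hP <;>
    rw [hp] <;> simp [pauliOp_sq, Matrix.neg_mul, Matrix.mul_neg]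

lemma stab_one {ψ : QVec n} : (1 : QMat n) ∈ stabGroup ψ := by
  refine ⟨⟨0, fun _ => 0, ?_⟩, Matrix.one_mulVec ψ⟩
  simp [pauliOp_zero]

lemma stab_mul {ψ : QVec n} (hψ : IsUnitVec ψ) {P Q : QMat n}
    (hP : P ∈ stabGroup ψ) (hQ : Q ∈ stabGroup ψ) : P * Q ∈ stabGroup ψ := by
  constructor
  · obtain ⟨p, hp⟩ := stab_form hψ hP
    obtain ⟨q, hq⟩ := stab_form hψ hQ
    have key : ∀ (b c : ℕ),
        (Complex.I ^ b • pauliOp p) * (Complex.I ^ c • pauliOp q) ∈ PauliGroup n := by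
      intro b c
      rw [Matrix.smul_mul, Matrix.mul_smul, pauliOp_mul, smul_smul, smul_smul,
        ← pow_add, ← pow_add]
      exact phase_smul_mem_pauliGroup _ _
    have h2 : ∀ (r : Fin n → Fin 4) (M : QMat n), M = pauliOp r ∨ M = -pauliOp r →
        ∃ b : ℕ, M = Complex.I ^ b • pauliOp r := by
      rintro r M (rfl | rfl)
      · exact ⟨0, by simp⟩
      · exact ⟨2, by norm_num [pow_succ, Complex.I_sq]⟩
    obtain ⟨b, hb⟩ := h2 p P hp
    obtain ⟨c, hc⟩ := h2 q Q hq
    rw [hb, hc]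
    exact key b c
  · rw [← Matrix.mulVec_mulVec, hQ.2, hP.2]

lemma stab_not_neg {ψ : QVec n} (hψ : IsUnitVec ψ) {P : QMat n}
    (hP : P ∈ stabGroup ψ) (hP' : -P ∈ stabGroup ψ) : False := by
  obtain ⟨x₀, hx₀⟩ := exists_ne_zero_of_unit hψ
  have h1 := congrFun hP.2 x₀
  have h2 := congrFun hP'.2 x₀
  rw [Matrix.neg_mulVec] at h2
  have h3 : -((P *ᵥ ψ) x₀) = ψ x₀ := h2
  rw [h1] at h3
  exact hx₀ (by linear_combination -h3/2)

lemma mergeFn_mem {A : Finset (Fin n)} (a : {j // j ∈ A} → Fin 2)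
    (z : {j // j ∈ Aᶜ} → Fin 2) {j : Fin n} (h : j ∈ A) :
    mergeFn A a z j = a ⟨j, h⟩ := dif_pos h

lemma mergeFn_not_mem {A : Finset (Fin n)} (a : {j // j ∈ A} → Fin 2)
    (z : {j // j ∈ Aᶜ} → Fin 2) {j : Fin n} (h : j ∉ A) :
    mergeFn A a z j = z ⟨j, Finset.mem_compl.mpr h⟩ := dif_neg h

/-- The splitting of assignments along `A`, `Aᶜ`. -/
def splitEquiv (A : Finset (Fin n)) :
    (({j // j ∈ A} → Fin 2) × ({j // j ∈ Aᶜ} → Fin 2)) ≃ (Fin n → Fin 2) where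
  toFun az := mergeFn A az.1 az.2
  invFun x := (fun j => x j.1, fun j => x j.1)
  left_inv az := by
    obtain ⟨a, z⟩ := az
    have h1 : (fun j : {j // j ∈ A} => mergeFn A a z j.1) = a := by
      funext j
      exact mergeFn_mem a z j.2
    have h2 : (fun j : {j // j ∈ Aᶜ} => mergeFn A a z j.1) = z := by
      funext j
      exact mergeFn_not_mem a z (Finset.mem_compl.mp j.2)
    simp only [h1, h2]
  right_inv x := by
    funext j
    by_cases h : j ∈ A
    · exact mergeFn_mem _ _ h
    · exact mergeFn_not_mem _ _ h

lemma splitEquiv_apply {A : Finset (Fin n)}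
    (cz : ({j // j ∈ A} → Fin 2) × ({j // j ∈ Aᶜ} → Fin 2)) :
    splitEquiv A cz = mergeFn A cz.1 cz.2 := rfl

lemma supp_one {A : Finset (Fin n)} : MatSupportedOn A (1 : QMat n) := by
  refine ⟨fun a b => if a = b then 1 else 0, fun x y => ?_⟩
  by_cases h2 : ∀ j ∉ A, x j = y j
  · by_cases h3 : (fun j : {j // j ∈ A} => x j.1) = (fun j : {j // j ∈ A} => y j.1)
    · have hxy : x = y := by
        funext j
        by_cases hj : j ∈ A
        · exact congrFun h3 ⟨j, hj⟩
        · exact h2 j hj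
      simp [hxy, Matrix.one_apply, h3]
    · have hxy : x ≠ y := fun hc => h3 (by rw [hc])
      simp [Matrix.one_apply_ne hxy, h2, h3]
  · have hxy : x ≠ y := fun hc => h2 (fun j _ => by rw [hc])
    simp [Matrix.one_apply_ne hxy, h2]

lemma supp_smul {A : Finset (Fin n)} {M : QMat n} (c : ℂ)
    (hM : MatSupportedOn A M) : MatSupportedOn A (c • M) := by
  obtain ⟨f, hf⟩ := hM
  refine ⟨fun a b => c * f a b, fun x y => ?_⟩
  rw [Matrix.smul_apply, hf x y]
  by_cases h : ∀ j ∉ A, x j = y j <;> simp [h]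

lemma supp_neg {A : Finset (Fin n)} {M : QMat n}
    (hM : MatSupportedOn A M) : MatSupportedOn A (-M) := by
  have := supp_smul (-1) hM
  simpa using this

lemma supp_mul {A : Finset (Fin n)} {M N : QMat n}
    (hM : MatSupportedOn A M) (hN : MatSupportedOn A N) :
    MatSupportedOn A (M * N) := by
  obtain ⟨f, hf⟩ := hM
  obtain ⟨g, hg⟩ := hN
  refine ⟨fun a b => ∑ c, f a c * g c b, fun x y => ?_⟩
  rw [Matrix.mul_apply]
  have reidx := Equiv.sum_comp (splitEquiv A) (fun z => M x z * N z y)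
  simp only [splitEquiv_apply] at reidx
  rw [← reidx]
  by_cases h : ∀ j ∉ A, x j = y j
  · rw [if_pos h, Fintype.sum_prod_type]
    refine Finset.sum_congr rfl fun c _ => ?_
    have inner : ∀ w : {j // j ∈ Aᶜ} → Fin 2,
        M x (mergeFn A c w) * N (mergeFn A c w) y =
          if w = (fun j => x j.1) then
            f (fun j => x j.1) c * g c (fun j => y j.1) else 0 := by
      intro w
      by_cases hw : w = (fun j : {j // j ∈ Aᶜ} => x j.1)
      · subst hw
        have hA : (fun j : {j // j ∈ A} =>
            mergeFn A c (fun j : {j // j ∈ Aᶜ} => x j.1) j.1) = c := by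
          funext j
          exact mergeFn_mem c _ j.2
        have hC1 : ∀ j ∉ A, x j = mergeFn A c (fun j : {j // j ∈ Aᶜ} => x j.1) j := by
          intro j hj
          rw [mergeFn_not_mem c _ hj]
        have hC2 : ∀ j ∉ A, mergeFn A c (fun j : {j // j ∈ Aᶜ} => x j.1) j = y j := by
          intro j hj
          rw [mergeFn_not_mem c _ hj]
          exact h j hj
        rw [if_pos rfl, hf, hg, if_pos hC1, if_pos hC2, hA]
      · rw [if_neg hw, hf, if_neg, zero_mul]
        intro hcontra
        apply hw
        funext j
        have h2 := hcontra j.1 (Finset.mem_compl.mp j.2)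
        rw [mergeFn_not_mem c w (Finset.mem_compl.mp j.2)] at h2
        exact h2.symm
    rw [Finset.sum_congr rfl fun w _ => inner w,
      Finset.sum_ite_eq' Finset.univ, if_pos (Finset.mem_univ _)]
  · rw [if_neg h]
    push_neg at h
    obtain ⟨j, hj, hxy⟩ := h
    apply Finset.sum_eq_zero
    intro cz _
    by_cases hc : mergeFn A cz.1 cz.2 j = x j
    · rw [hg, if_neg, mul_zero]
      intro hcontra
      exact hxy (by rw [← hcontra j hj, hc])
    · rw [hf, if_neg, zero_mul]
      intro hcontra
      exact hc (hcontra j hj).symm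

/-- column choice making `pauli1 a 0 (yc a)` nonzero -/
def yc : Fin 4 → Fin 2 := fun a => if a = 0 ∨ a = 3 then 0 else 1

lemma pauli1_nz (a : Fin 4) : pauli1 a 0 (yc a) ≠ 0 := by
  fin_cases a <;> simp [pauli1, yc, Complex.I_ne_zero]

lemma pauli1_zero_apply (u v : Fin 2) :
    pauli1 0 u v = if u = v then 1 else 0 := Matrix.one_apply

lemma supp_smul_pauliOp {A : Finset (Fin n)} (w : ℂ) {s : Fin n → Fin 4}
    (hs : ∀ j ∉ A, s j = 0) : MatSupportedOn A (w • pauliOp s) := by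
  refine ⟨fun a b => w * ∏ j : {j // j ∈ A}, pauli1 (s j.1) (a j) (b j),
    fun x y => ?_⟩
  have hsplit : pauliOp s x y =
      (∏ j ∈ A, pauli1 (s j) (x j) (y j)) * ∏ j ∈ Aᶜ, pauli1 (s j) (x j) (y j) := by
    rw [pauliOp_apply, Finset.prod_mul_prod_compl]
  by_cases h : ∀ j ∉ A, x j = y j
  · rw [if_pos h, Matrix.smul_apply, smul_eq_mul, hsplit]
    have h1 : ∏ j ∈ Aᶜ, pauli1 (s j) (x j) (y j) = 1 := by
      apply Finset.prod_eq_one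
      intro j hj
      rw [hs j (Finset.mem_compl.mp hj), pauli1_zero_apply,
        if_pos (h j (Finset.mem_compl.mp hj))]
    rw [h1, mul_one]
    congr 1
    exact (Finset.prod_coe_sort A fun j => pauli1 (s j) (x j) (y j)).symm
  · rw [if_neg h, Matrix.smul_apply, smul_eq_mul]
    push_neg at h
    obtain ⟨j, hj, hxy⟩ := h
    have : pauliOp s x y = 0 := by
      rw [pauliOp_apply]
      exact Finset.prod_eq_zero (Finset.mem_univ j)
        (by rw [hs j hj, pauli1_zero_apply, if_neg hxy])
    rw [this, mul_zero]

lemma supp_pauliOp_str {A : Finset (Fin n)} {w : ℂ} (hw : w ≠ 0) {s : Fin n → Fin 4}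
    (hsupp : MatSupportedOn A (w • pauliOp s)) : ∀ j ∉ A, s j = 0 := by
  obtain ⟨f, hf⟩ := hsupp
  set x : Fin n → Fin 2 := fun _ => 0 with hx
  set y : Fin n → Fin 2 := fun j => yc (s j) with hy
  have hPxy : pauliOp s x y ≠ 0 := by
    rw [pauliOp_apply, Finset.prod_ne_zero_iff]
    intro j _
    have : x j = 0 := rfl
    rw [this, hy]
    exact pauli1_nz (s j)
  have hprod : (w • pauliOp s) x y ≠ 0 := by
    rw [Matrix.smul_apply, smul_eq_mul]
    exact mul_ne_zero hw hPxy
  have step1 : ∀ j ∉ A, s j = 0 ∨ s j = 3 := by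
    intro j hj
    by_contra hc
    push_neg at hc
    have hyj : y j = 1 := by
      rw [hy]
      simp only [yc]
      rw [if_neg]
      push_neg
      exact hc
    have hne : ¬ ∀ j' ∉ A, x j' = y j' := by
      intro hforall
      have h2 := hforall j hj
      rw [hyj] at h2
      have h2' : (0 : Fin 2) = 1 := h2
      exact absurd h2' (by decide)
    have h3 := hf x y
    rw [if_neg hne] at h3
    exact hprod h3
  intro j hj
  rcases step1 j hj with h0 | h3
  · exact h0
  exfalso
  have hagree : ∀ j' ∉ A, x j' = y j' := by
    intro j' hj'
    rcases step1 j' hj' with h' | h' <;> simp [hx, hy, yc, h']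
  set x' := Function.update x j 1 with hx'
  set y' := Function.update y j 1 with hy'
  have hyj : y j = 0 := by simp [hy, yc, h3]
  have hagree' : ∀ j' ∉ A, x' j' = y' j' := by
    intro j' hj'
    by_cases hjj : j' = j
    · subst hjj
      rw [hx', hy', Function.update_self, Function.update_self]
    · rw [hx', hy', Function.update_of_ne hjj, Function.update_of_ne hjj]
      exact hagree j' hj'
  have hrestr1 : (fun jj : {j // j ∈ A} => x' jj.1) = (fun jj : {j // j ∈ A} => x jj.1) := by
    funext jj
    exact Function.update_of_ne (fun hc => hj (by rw [← hc]; exact jj.2)) _ _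
  have hrestr2 : (fun jj : {j // j ∈ A} => y' jj.1) = (fun jj : {j // j ∈ A} => y jj.1) := by
    funext jj
    exact Function.update_of_ne (fun hc => hj (by rw [← hc]; exact jj.2)) _ _
  have hv1 := hf x y
  rw [if_pos hagree] at hv1
  have hv2 := hf x' y'
  rw [if_pos hagree', hrestr1, hrestr2] at hv2
  have heq : (w • pauliOp s) x' y' = (w • pauliOp s) x y := by rw [hv1, hv2]
  have hfactor : ∀ j', j' ≠ j →
      pauli1 (s j') (x' j') (y' j') = pauli1 (s j') (x j') (y j') := by
    intro j' hne
    rw [hx', hy', Function.update_of_ne hne, Function.update_of_ne hne]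
  have hneg : pauliOp s x' y' = - pauliOp s x y := by
    rw [pauliOp_apply, pauliOp_apply,
      ← Finset.mul_prod_erase Finset.univ
        (fun j' => pauli1 (s j') (x' j') (y' j')) (Finset.mem_univ j),
      ← Finset.mul_prod_erase Finset.univ
        (fun j' => pauli1 (s j') (x j') (y j')) (Finset.mem_univ j)]
    rw [Finset.prod_congr rfl (fun j' hj' => hfactor j' (Finset.ne_of_mem_erase hj'))]
    have e1 : pauli1 (s j) (x' j) (y' j) = -1 := by
      rw [hx', hy']
      simp [h3, pauli1]
    have e2 : pauli1 (s j) (x j) (y j) = 1 := by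
      have hxj : x j = 0 := rfl
      rw [hxj, hyj, h3]
      simp [pauli1]
    rw [e1, e2]
    ring
  have h4 := heq
  rw [Matrix.smul_apply, Matrix.smul_apply, hneg, smul_eq_mul, smul_eq_mul] at h4
  have h5 : w * pauliOp s x y = 0 := by linear_combination -h4 / 2
  apply hprod
  rw [Matrix.smul_apply, smul_eq_mul]
  exact h5

/-- Pauli strings supported on `A`. -/
def PS (A : Finset (Fin n)) : Finset (Fin n → Fin 4) :=
  Fintype.piFinset (fun j => if j ∈ A then (Finset.univ : Finset (Fin 4)) else {0})

lemma mem_PS {A : Finset (Fin n)} {p : Fin n → Fin 4} :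
    p ∈ PS A ↔ ∀ j ∉ A, p j = 0 := by
  rw [PS, Fintype.mem_piFinset]
  constructor
  · intro h j hj
    have h2 := h j
    rwa [if_neg hj, Finset.mem_singleton] at h2
  · intro h j
    by_cases hj : j ∈ A
    · rw [if_pos hj]
      exact Finset.mem_univ _
    · rw [if_neg hj, Finset.mem_singleton]
      exact h j hj

lemma kernel (A : Finset (Fin n)) (x v x' v' : Fin n → Fin 2) :
    ∑ p ∈ PS A, pauliOp p x v * star (pauliOp p x' v') =
      if (∀ j ∈ A, x j = x' j) ∧ (∀ j ∈ A, v j = v' j) ∧ (∀ j ∉ A, x j = v j)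
        ∧ (∀ j ∉ A, x' j = v' j) then (2:ℂ)^A.card else 0 := by
  have hterm : ∀ p : Fin n → Fin 4, pauliOp p x v * star (pauliOp p x' v')
      = ∏ j, (pauli1 (p j) (x j) (v j) * pauli1 (p j) (v' j) (x' j)) := by
    intro p
    rw [pauliOp_apply, pauliOp_apply, star_prod, ← Finset.prod_mul_distrib]
    exact Finset.prod_congr rfl fun j _ => by rw [pauli1_star]
  rw [Finset.sum_congr rfl fun p _ => hterm p, PS]
  have hps := Finset.prod_univ_sum
    (fun j : Fin n => if j ∈ A then (Finset.univ : Finset (Fin 4)) else {0})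
    (fun j a => pauli1 a (x j) (v j) * pauli1 a (v' j) (x' j))
  rw [← hps]
  have hsite : ∀ j : Fin n,
      (∑ a ∈ (if j ∈ A then (Finset.univ : Finset (Fin 4)) else {0}),
        pauli1 a (x j) (v j) * pauli1 a (v' j) (x' j)) =
      if j ∈ A then (if x j = x' j ∧ v j = v' j then 2 else 0)
      else ((if x j = v j then 1 else 0) * (if v' j = x' j then 1 else 0)) := by
    intro j
    by_cases hj : j ∈ A
    · rw [if_pos hj, if_pos hj]
      exact pauli1_complete (x j) (v j) (x' j) (v' j)
    · rw [if_neg hj, if_neg hj, Finset.sum_singleton, pauli1_zero_apply, pauli1_zero_apply]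
  rw [Finset.prod_congr rfl fun j _ => hsite j, ← Finset.prod_mul_prod_compl A]
  have h1 : (∏ j ∈ A, if j ∈ A then (if x j = x' j ∧ v j = v' j then (2:ℂ) else 0)
      else ((if x j = v j then 1 else 0) * (if v' j = x' j then 1 else 0)))
      = (2:ℂ)^A.card * (if ∀ j ∈ A, (x j = x' j ∧ v j = v' j) then 1 else 0) := by
    have ha : ∀ j ∈ A, (if j ∈ A then (if x j = x' j ∧ v j = v' j then (2:ℂ) else 0)
        else ((if x j = v j then 1 else 0) * (if v' j = x' j then 1 else 0)))
        = 2 * (if x j = x' j ∧ v j = v' j then 1 else 0) := by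
      intro j hj
      rw [if_pos hj]
      split <;> ring
    rw [Finset.prod_congr rfl ha, Finset.prod_mul_distrib, Finset.prod_const, Finset.prod_boole]
    congr 1
    convert rfl
  have h2 : (∏ j ∈ Aᶜ, if j ∈ A then (if x j = x' j ∧ v j = v' j then (2:ℂ) else 0)
      else ((if x j = v j then 1 else 0) * (if v' j = x' j then 1 else 0)))
      = (if ∀ j ∈ Aᶜ, x j = v j then (1:ℂ) else 0)
        * (if ∀ j ∈ Aᶜ, v' j = x' j then 1 else 0) := by
    rw [Finset.prod_congr rfl (fun j hj => by rw [if_neg (Finset.mem_compl.mp hj)]),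
      Finset.prod_mul_distrib, Finset.prod_boole, Finset.prod_boole]
    congr 1
    · convert rfl
    · convert rfl
  rw [h1, h2]
  have e1 : (∀ j ∈ A, (x j = x' j ∧ v j = v' j)) ↔
      (∀ j ∈ A, x j = x' j) ∧ (∀ j ∈ A, v j = v' j) :=
    ⟨fun h => ⟨fun j hj => (h j hj).1, fun j hj => (h j hj).2⟩,
     fun h j hj => ⟨h.1 j hj, h.2 j hj⟩⟩
  have e2 : (∀ j ∈ Aᶜ, x j = v j) ↔ (∀ j ∉ A, x j = v j) := by
    simp [Finset.mem_compl]
  have e3 : (∀ j ∈ Aᶜ, v' j = x' j) ↔ (∀ j ∉ A, x' j = v' j) := by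
    simp only [Finset.mem_compl]
    constructor
    · intro h j hj
      exact (h j hj).symm
    · intro h j hj
      exact (h j hj).symm
  by_cases hc : (∀ j ∈ A, x j = x' j) ∧ (∀ j ∈ A, v j = v' j) ∧ (∀ j ∉ A, x j = v j)
      ∧ (∀ j ∉ A, x' j = v' j)
  · obtain ⟨c1, c2, c3, c4⟩ := hc
    have d1 : ∀ j ∈ A, (x j = x' j ∧ v j = v' j) := e1.mpr ⟨c1, c2⟩
    have d2 := e2.mpr c3
    have d3 := e3.mpr c4
    rw [if_pos (⟨c1, c2, c3, c4⟩ : _ ∧ _ ∧ _ ∧ _), if_pos d1, if_pos d2, if_pos d3]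
    ring
  · rw [if_neg hc]
    by_cases d1 : ∀ j ∈ A, (x j = x' j ∧ v j = v' j)
    · by_cases d2 : ∀ j ∈ Aᶜ, x j = v j
      · by_cases d3 : ∀ j ∈ Aᶜ, v' j = x' j
        · exact absurd ⟨(e1.mp d1).1, (e1.mp d1).2, e2.mp d2, e3.mp d3⟩ hc
        · rw [if_neg d3]
          ring
      · rw [if_neg d2]
        ring
    · rw [if_neg d1]
      ring

lemma trace_mul_dm (M : QMat n) (ψ : QVec n) :
    Matrix.trace (M * dm ψ) =
      ∑ u : (Fin n → Fin 2) × (Fin n → Fin 2), M u.1 u.2 * (ψ u.2 * star (ψ u.1)) := by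
  rw [Matrix.trace, Fintype.sum_prod_type]
  refine Finset.sum_congr rfl fun x _ => ?_
  rw [Matrix.diag, Matrix.mul_apply]
  refine Finset.sum_congr rfl fun v _ => ?_
  simp [dm, Matrix.vecMulVec_apply]

/-- the quadruple index type -/
abbrev T4 (A : Finset (Fin n)) :=
  ({j // j ∈ A} → Fin 2) × (({j // j ∈ A} → Fin 2) ×
    (({j // j ∈ Aᶜ} → Fin 2) × ({j // j ∈ Aᶜ} → Fin 2)))

/-- the embedding of the quadruple index into pairs of index pairs -/
def iota (A : Finset (Fin n)) (t : T4 A) :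
    ((Fin n → Fin 2) × (Fin n → Fin 2)) × ((Fin n → Fin 2) × (Fin n → Fin 2)) :=
  ((mergeFn A t.1 t.2.2.2, mergeFn A t.2.1 t.2.2.2),
   (mergeFn A t.1 t.2.2.1, mergeFn A t.2.1 t.2.2.1))

lemma mergeFn_inj {A : Finset (Fin n)} {a a' : {j // j ∈ A} → Fin 2}
    {z z' : {j // j ∈ Aᶜ} → Fin 2} (h : mergeFn A a z = mergeFn A a' z') :
    a = a' ∧ z = z' := by
  constructor
  · funext j
    have h2 := congrFun h j.1
    rwa [mergeFn_mem a z j.2, mergeFn_mem a' z' j.2] at h2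
  · funext j
    have h2 := congrFun h j.1
    rwa [mergeFn_not_mem a z (Finset.mem_compl.mp j.2),
      mergeFn_not_mem a' z' (Finset.mem_compl.mp j.2)] at h2

lemma iota_inj (A : Finset (Fin n)) : Function.Injective (iota A) := by
  rintro ⟨a, b, z, w⟩ ⟨a', b', z', w'⟩ h
  rw [iota, iota, Prod.mk.injEq, Prod.mk.injEq, Prod.mk.injEq] at h
  obtain ⟨⟨h1, h2⟩, h3, h4⟩ := h
  obtain ⟨ha, hw⟩ := mergeFn_inj h1
  obtain ⟨hb, -⟩ := mergeFn_inj h2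
  obtain ⟨-, hz⟩ := mergeFn_inj h3
  subst ha hb hz hw
  rfl

lemma purity_expansion (A : Finset (Fin n)) (ψ : QVec n) :
    (2:ℂ)^A.card * Matrix.trace (reducedDM A ψ * reducedDM A ψ)
      = ∑ p ∈ PS A,
          Matrix.trace (pauliOp p * dm ψ) * star (Matrix.trace (pauliOp p * dm ψ)) := by
  classical
  set V2 := (Fin n → Fin 2) × (Fin n → Fin 2)
  -- expand each trace
  have step1 : ∀ p ∈ PS A,
      Matrix.trace (pauliOp p * dm ψ) * star (Matrix.trace (pauliOp p * dm ψ))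
        = ∑ q : V2 × V2,
            (pauliOp p q.1.1 q.1.2 * star (pauliOp p q.2.1 q.2.2)) *
              ((ψ q.1.2 * star (ψ q.1.1)) * star (ψ q.2.2 * star (ψ q.2.1))) := by
    intro p _
    rw [trace_mul_dm, star_sum, Finset.sum_mul_sum]
    conv_rhs => rw [Fintype.sum_prod_type]
    refine Finset.sum_congr rfl fun u _ => ?_
    refine Finset.sum_congr rfl fun u' _ => ?_
    rw [star_mul']
    ring
  rw [Finset.sum_congr rfl step1, Finset.sum_comm]
  -- kernel evaluation
  have step2 : ∀ q : V2 × V2,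
      (∑ p ∈ PS A, (pauliOp p q.1.1 q.1.2 * star (pauliOp p q.2.1 q.2.2)) *
          ((ψ q.1.2 * star (ψ q.1.1)) * star (ψ q.2.2 * star (ψ q.2.1))))
        = (if (∀ j ∈ A, q.1.1 j = q.2.1 j) ∧ (∀ j ∈ A, q.1.2 j = q.2.2 j)
              ∧ (∀ j ∉ A, q.1.1 j = q.1.2 j) ∧ (∀ j ∉ A, q.2.1 j = q.2.2 j)
            then (2:ℂ)^A.card else 0) *
          ((ψ q.1.2 * star (ψ q.1.1)) * star (ψ q.2.2 * star (ψ q.2.1))) := by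
    intro q
    rw [← Finset.sum_mul, kernel A q.1.1 q.1.2 q.2.1 q.2.2]
  rw [Finset.sum_congr rfl fun q _ => step2 q]
  -- restrict to the image of iota
  have himage : ∀ q : V2 × V2, q ∈ Finset.univ →
      q ∉ Finset.univ.image (iota A) →
      (if (∀ j ∈ A, q.1.1 j = q.2.1 j) ∧ (∀ j ∈ A, q.1.2 j = q.2.2 j)
          ∧ (∀ j ∉ A, q.1.1 j = q.1.2 j) ∧ (∀ j ∉ A, q.2.1 j = q.2.2 j)
        then (2:ℂ)^A.card else 0) *
        ((ψ q.1.2 * star (ψ q.1.1)) * star (ψ q.2.2 * star (ψ q.2.1))) = 0 := by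
    rintro ⟨⟨x, v⟩, ⟨x', v'⟩⟩ - hq
    rw [if_neg, zero_mul]
    rintro ⟨c1, c2, c3, c4⟩
    apply hq
    rw [Finset.mem_image]
    refine ⟨(fun j => x j.1, (fun j => v j.1, (fun j => x' j.1, fun j => x j.1))), Finset.mem_univ _, ?_⟩
    simp only [iota]
    have m1 : mergeFn A (fun j : {j // j ∈ A} => x j.1) (fun j : {j // j ∈ Aᶜ} => x j.1) = x := by
      funext j
      by_cases hj : j ∈ A
      · rw [mergeFn_mem _ _ hj]
      · rw [mergeFn_not_mem _ _ hj]
    have m2 : mergeFn A (fun j : {j // j ∈ A} => v j.1) (fun j : {j // j ∈ Aᶜ} => x j.1) = v := by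
      funext j
      by_cases hj : j ∈ A
      · rw [mergeFn_mem _ _ hj]
      · rw [mergeFn_not_mem _ _ hj]
        exact c3 j hj
    have m3 : mergeFn A (fun j : {j // j ∈ A} => x j.1) (fun j : {j // j ∈ Aᶜ} => x' j.1) = x' := by
      funext j
      by_cases hj : j ∈ A
      · rw [mergeFn_mem _ _ hj]
        exact c1 j hj
      · rw [mergeFn_not_mem _ _ hj]
    have m4 : mergeFn A (fun j : {j // j ∈ A} => v j.1) (fun j : {j // j ∈ Aᶜ} => x' j.1) = v' := by
      funext j
      by_cases hj : j ∈ A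
      · rw [mergeFn_mem _ _ hj]
        exact c2 j hj
      · rw [mergeFn_not_mem _ _ hj]
        exact c4 j hj
    rw [m1, m2, m3, m4]
  rw [← Finset.sum_subset (Finset.subset_univ (Finset.univ.image (iota A))) himage,
    Finset.sum_image (fun t _ t' _ h => iota_inj A h)]
  -- evaluate on the image
  have step3 : ∀ t : T4 A,
      (if (∀ j ∈ A, (iota A t).1.1 j = (iota A t).2.1 j)
          ∧ (∀ j ∈ A, (iota A t).1.2 j = (iota A t).2.2 j)
          ∧ (∀ j ∉ A, (iota A t).1.1 j = (iota A t).1.2 j)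
          ∧ (∀ j ∉ A, (iota A t).2.1 j = (iota A t).2.2 j)
        then (2:ℂ)^A.card else 0) = (2:ℂ)^A.card := by
    rintro ⟨a, b, z, w⟩
    rw [if_pos]
    refine ⟨?_, ?_, ?_, ?_⟩
    · intro j hj
      simp only [iota]
      rw [mergeFn_mem _ _ hj, mergeFn_mem _ _ hj]
    · intro j hj
      simp only [iota]
      rw [mergeFn_mem _ _ hj, mergeFn_mem _ _ hj]
    · intro j hj
      simp only [iota]
      rw [mergeFn_not_mem _ _ hj, mergeFn_not_mem _ _ hj]
    · intro j hj
      simp only [iota]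
      rw [mergeFn_not_mem _ _ hj, mergeFn_not_mem _ _ hj]
  rw [Finset.sum_congr rfl fun t _ => by rw [step3 t]]
  -- expand the left side
  have lhs : Matrix.trace (reducedDM A ψ * reducedDM A ψ)
      = ∑ t : T4 A,
          ((ψ ((iota A t).1.2) * star (ψ ((iota A t).1.1)))
            * star (ψ ((iota A t).2.2) * star (ψ ((iota A t).2.1)))) := by
    rw [Matrix.trace]
    have diag : ∀ a, Matrix.diag (reducedDM A ψ * reducedDM A ψ) a
        = ∑ b, reducedDM A ψ a b * reducedDM A ψ b a := fun a => Matrix.mul_apply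
    rw [Finset.sum_congr rfl fun a _ => diag a]
    rw [Fintype.sum_prod_type]
    refine Finset.sum_congr rfl fun a _ => ?_
    rw [Fintype.sum_prod_type]
    refine Finset.sum_congr rfl fun b _ => ?_
    rw [reducedDM, reducedDM, Finset.sum_mul_sum, Fintype.sum_prod_type]
    refine Finset.sum_congr rfl fun z _ => ?_
    refine Finset.sum_congr rfl fun w _ => ?_
    simp only [iota, star_mul', star_star, Pi.star_apply]
    ring
  rw [lhs, Finset.mul_sum]

lemma trace_stab_absorb {ψ : QVec n} {Q : QMat n} (hQ : Q ∈ stabGroup ψ) (M : QMat n) :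
    Matrix.trace ((M * Q) * dm ψ) = Matrix.trace (M * dm ψ) := by
  rw [Matrix.mul_assoc, mul_dm_of_stab hQ]

lemma pm_eq_str {p q : Fin n → Fin 4} {M : QMat n}
    (h1 : M = pauliOp p ∨ M = -pauliOp p) (h2 : M = pauliOp q ∨ M = -pauliOp q) :
    p = q := by
  have conv1 : ∀ (r : Fin n → Fin 4) (M' : QMat n), M' = pauliOp r ∨ M' = -pauliOp r →
      ∃ c : ℂ, c ≠ 0 ∧ M' = c • pauliOp r := by
    rintro r M' (rfl | rfl)
    · exact ⟨1, one_ne_zero, (one_smul _ _).symm⟩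
    · exact ⟨-1, by norm_num, by simp⟩
  obtain ⟨c, hc, hc2⟩ := conv1 p M h1
  obtain ⟨d, hd, hd2⟩ := conv1 q M h2
  exact (smul_pauliOp_inj hc (hc2 ▸ hd2)).1

lemma phase_pm {ψ : QVec n} {M : QMat n} {s : Fin n → Fin 4} {c : ℕ}
    (hM : M = Complex.I ^ c • pauliOp s)
    (hreal : star (Matrix.trace (M * dm ψ)) = Matrix.trace (M * dm ψ))
    (hnz : Matrix.trace (M * dm ψ) ≠ 0) :
    M = pauliOp s ∨ M = -pauliOp s := by
  have ht : Matrix.trace (M * dm ψ) =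
      Complex.I ^ c * Matrix.trace (pauliOp s * dm ψ) := by
    rw [hM, Matrix.smul_mul, Matrix.trace_smul, smul_eq_mul]
  set t := Matrix.trace (pauliOp s * dm ψ) with htdef
  have htreal : star t = t := star_trace_mul_dm (pauliOp_conjTranspose s)
  have htnz : t ≠ 0 := by
    intro hzero
    apply hnz
    rw [ht, hzero, mul_zero]
  have hMc : M = Complex.I ^ (c % 4) • pauliOp s := by rw [hM, I_pow_mod]
  have htc : Matrix.trace (M * dm ψ) = Complex.I ^ (c % 4) * t := by
    rw [ht, I_pow_mod]
  have h4 : c % 4 = 0 ∨ c % 4 = 1 ∨ c % 4 = 2 ∨ c % 4 = 3 := by omega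
  rcases h4 with hr | hr | hr | hr <;> rw [hr] at hMc htc
  · left
    rw [hMc]
    simp
  · exfalso
    rw [htc, pow_one] at hreal
    have h2 : (starRingEnd ℂ) (Complex.I * t) = Complex.I * t := hreal
    rw [map_mul, Complex.conj_I] at h2
    have h3 : (starRingEnd ℂ) t = t := htreal
    rw [h3] at h2
    exact htnz (by linear_combination (Complex.I / 2) * h2 + t * Complex.I_sq)
  · right
    rw [hMc]
    norm_num [pow_succ, Complex.I_sq]
  · exfalso
    have hI3 : Complex.I ^ 3 = -Complex.I := by
      norm_num [pow_succ, Complex.I_sq]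
    rw [htc, hI3] at hreal
    have h2 : (starRingEnd ℂ) (-Complex.I * t) = -Complex.I * t := hreal
    rw [map_mul, map_neg, Complex.conj_I] at h2
    have h3 : (starRingEnd ℂ) t = t := htreal
    rw [h3] at h2
    exact htnz (by linear_combination (-Complex.I / 2) * h2 + t * Complex.I_sq)

lemma prod_form {s t : ℂ} (hs : s = 1 ∨ s = -1) (ht : t = 1 ∨ t = -1)
    (p q : Fin n → Fin 4) :
    ∃ c : ℕ, (s • pauliOp p) * (t • pauliOp q)
      = Complex.I ^ c • pauliOp (fun j => pm (p j) (q j)) := by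
  have hbase : (s • pauliOp p) * (t • pauliOp q)
      = (s * t) • (Complex.I ^ (∑ j, pe (p j) (q j)) • pauliOp (fun j => pm (p j) (q j))) := by
    rw [Matrix.smul_mul, Matrix.mul_smul, pauliOp_mul, smul_smul, smul_smul]
  have hst : s * t = 1 ∨ s * t = -1 := by
    rcases hs with rfl | rfl <;> rcases ht with rfl | rfl <;> norm_num
  rcases hst with h1 | h1
  · exact ⟨∑ j, pe (p j) (q j), by rw [hbase, h1, one_smul]⟩
  · refine ⟨2 + ∑ j, pe (p j) (q j), ?_⟩
    rw [hbase, h1, pow_add, Complex.I_sq, smul_smul, neg_one_mul]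

/-- Representation of `h * Q` (Hermitian Pauli times stabilizer) as `±pauliOp`. -/
lemma rep_pm {ψ : QVec n} (hψ : IsUnitVec ψ) {H Q : QMat n}
    (hH : IsHermPauli H) (hQ : Q ∈ stabGroup ψ)
    (hnzH : Matrix.trace (H * dm ψ) ≠ 0) :
    (∃ s, H * Q = pauliOp s ∨ H * Q = -pauliOp s)
      ∧ Matrix.trace ((H * Q) * dm ψ) = Matrix.trace (H * dm ψ) := by
  have habs : Matrix.trace ((H * Q) * dm ψ) = Matrix.trace (H * dm ψ) :=
    trace_stab_absorb hQ H
  refine ⟨?_, habs⟩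
  obtain ⟨s, p, hs, hHf⟩ := hH
  obtain ⟨q, hQf⟩ := stab_form hψ hQ
  have hQf2 : ∃ u : ℂ, (u = 1 ∨ u = -1) ∧ Q = u • pauliOp q := by
    rcases hQf with h1 | h1
    · exact ⟨1, Or.inl rfl, by rw [h1, one_smul]⟩
    · exact ⟨-1, Or.inr rfl, by rw [h1]; simp⟩
  obtain ⟨u, hu, hQf3⟩ := hQf2
  obtain ⟨c, hc⟩ := prod_form hs hu p q
  rw [← hHf, ← hQf3] at hc
  have hreal : star (Matrix.trace ((H * Q) * dm ψ)) = Matrix.trace ((H * Q) * dm ψ) := by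
    rw [habs]
    exact star_trace_mul_dm (hermPauli_conjTranspose ⟨s, p, hs, hHf⟩)
  have hnz2 : Matrix.trace ((H * Q) * dm ψ) ≠ 0 := by
    rw [habs]
    exact hnzH
  exact ⟨_, phase_pm hc hreal hnz2⟩

lemma herm_sq {H : QMat n} (hH : IsHermPauli H) : H * H = 1 := by
  obtain ⟨s, p, hs, rfl⟩ := hH
  rw [Matrix.smul_mul, Matrix.mul_smul, pauliOp_sq, smul_smul]
  rcases hs with rfl | rfl <;> norm_num

lemma pm_sq {M : QMat n} {s : Fin n → Fin 4}
    (h : M = pauliOp s ∨ M = -pauliOp s) : M * M = 1 := by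
  rcases h with rfl | rfl
  · exact pauliOp_sq s
  · rw [Matrix.neg_mul, Matrix.mul_neg, neg_neg]
    exact pauliOp_sq s

lemma supp_pauliOp_of_mem_PS {A : Finset (Fin n)} {p : Fin n → Fin 4}
    (hp : ∀ j ∉ A, p j = 0) : MatSupportedOn A (pauliOp p) := by
  have := supp_smul_pauliOp (A := A) 1 hp
  rwa [one_smul] at this

lemma stab_finite (ψ : QVec n) (A : Finset (Fin n)) : (localStab ψ A).Finite := by
  have hsub : localStab ψ A ⊆ Set.range
      (fun ap : Fin 4 × (Fin n → Fin 4) => Complex.I ^ (ap.1 : ℕ) • pauliOp ap.2) := by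
    rintro M ⟨⟨⟨a, p, hM⟩, -⟩, -⟩
    exact ⟨(a, p), hM.symm⟩
  exact Set.Finite.subset (Set.finite_range _) hsub

lemma or_to_smul {M X : QMat n} (hor : M = X ∨ M = -X) :
    ∃ ε : ℂ, (ε = 1 ∨ ε = -1) ∧ M = ε • X := by
  rcases hor with rfl | rfl
  · exact ⟨1, Or.inl rfl, (one_smul _ _).symm⟩
  · exact ⟨-1, Or.inr rfl, by simp⟩

lemma master {k : ℕ} {ψ : QVec n} (hψ : IsUnitVec ψ) (A : Finset (Fin n))
    (h : Fin (k + 1) → QMat n)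
    (hherm : ∀ i, IsHermPauli (h i))
    (hnz : ∀ i, Matrix.trace (h i * dm ψ) ≠ 0)
    (hdistinct : ∀ i j, i ≠ j → ∀ P ∈ stabGroup ψ, h i ≠ h j * P ∧ h i ≠ -(h j * P))
    (hcomplete : ∀ P : QMat n, IsHermPauli P → Matrix.trace (P * dm ψ) ≠ 0 →
      ∃ i, ∃ Q ∈ stabGroup ψ, P = h i * Q ∨ P = -(h i * Q)) :
    ∑ p ∈ PS A, Matrix.trace (pauliOp p * dm ψ) * star (Matrix.trace (pauliOp p * dm ψ))
      = (((localStab ψ A).ncard : ℝ) : ℂ) *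
        ((∑ i, if ∃ P ∈ stabGroup ψ, MatSupportedOn A (h i * P)
          then ((Matrix.trace (h i * dm ψ)).re) ^ 2 else 0 : ℝ) : ℂ) := by
  classical
  set F : (Fin n → Fin 4) → ℂ := fun p =>
    Matrix.trace (pauliOp p * dm ψ) * star (Matrix.trace (pauliOp p * dm ψ)) with hF
  set cond : Fin (k + 1) → (Fin n → Fin 4) → Prop := fun i p =>
    ∃ Q ∈ stabGroup ψ, pauliOp p = h i * Q ∨ pauliOp p = -(h i * Q) with hcond
  set Si : Fin (k + 1) → Finset (Fin n → Fin 4) := fun i =>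
    (PS A).filter (cond i) with hSi
  set del : Fin (k + 1) → Prop := fun i =>
    ∃ P ∈ stabGroup ψ, MatSupportedOn A (h i * P) with hdel
  set N : ℕ := (localStab ψ A).ncard with hN
  -- (F1) value on Si i
  have F1 : ∀ i, ∀ p ∈ Si i, F p = ((((Matrix.trace (h i * dm ψ)).re) ^ 2 : ℝ) : ℂ) := by
    intro i p hp
    obtain ⟨Q, hQ, hor⟩ := (Finset.mem_filter.mp hp).2
    have habs : Matrix.trace ((h i * Q) * dm ψ) = Matrix.trace (h i * dm ψ) :=
      trace_stab_absorb hQ (h i)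
    have hreal : Matrix.trace (h i * dm ψ) = (((Matrix.trace (h i * dm ψ)).re : ℝ) : ℂ) :=
      trace_mul_dm_real (hermPauli_conjTranspose (hherm i))
    have hval : Matrix.trace (pauliOp p * dm ψ) = Matrix.trace (h i * dm ψ)
        ∨ Matrix.trace (pauliOp p * dm ψ) = -Matrix.trace (h i * dm ψ) := by
      rcases hor with he | he
      · left
        rw [he, habs]
      · right
        rw [he, Matrix.neg_mul, Matrix.trace_neg, habs]
    rw [hF]
    simp only
    rcases hval with hv | hv <;>
      · rw [hv, hreal]
        simp only [star_neg, Complex.star_def, Complex.conj_ofReal, Complex.ofReal_re]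
        push_cast
        ring
  -- (F2) disjointness
  have F2 : ∀ i j, i ≠ j → Disjoint (Si i) (Si j) := by
    intro i j hne
    rw [Finset.disjoint_left]
    intro p hpi hpj
    obtain ⟨Q1, hQ1, e1⟩ := (Finset.mem_filter.mp hpi).2
    obtain ⟨Q2, hQ2, e2⟩ := (Finset.mem_filter.mp hpj).2
    obtain ⟨ε1, hε1, f1⟩ := or_to_smul e1
    obtain ⟨ε2, hε2, f2⟩ := or_to_smul e2
    -- h i = ε1 • (pauliOp p * Q1)
    have g1 : h i = ε1 • (pauliOp p * Q1) := by
      have : pauliOp p * Q1 = (ε1 • (h i * Q1)) * Q1 := by rw [← f1]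
      rw [this, Matrix.smul_mul, Matrix.mul_assoc, stab_sq hψ hQ1, Matrix.mul_one,
        smul_smul]
      rcases hε1 with rfl | rfl <;> norm_num
    have g2 : h i = (ε1 * ε2) • (h j * (Q2 * Q1)) := by
      rw [g1, f2, Matrix.smul_mul, smul_smul, Matrix.mul_assoc]
    have hQ21 : Q2 * Q1 ∈ stabGroup ψ := stab_mul hψ hQ2 hQ1
    have hd := hdistinct i j hne (Q2 * Q1) hQ21
    have hε12 : ε1 * ε2 = 1 ∨ ε1 * ε2 = -1 := by
      rcases hε1 with rfl | rfl <;> rcases hε2 with rfl | rfl <;> norm_num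
    rcases hε12 with he | he
    · rw [he, one_smul] at g2
      exact hd.1 g2
    · rw [he] at g2
      refine hd.2 ?_
      rw [g2]
      simp
  -- (F3) empty if not delta
  have F3 : ∀ i, ¬ del i → Si i = ∅ := by
    intro i hdi
    rw [Finset.eq_empty_iff_forall_notMem]
    intro p hp
    rw [Finset.mem_filter] at hp
    obtain ⟨hpPS, Q, hQ, hor⟩ := hp
    apply hdi
    have hsupp : MatSupportedOn A (pauliOp p) :=
      supp_pauliOp_of_mem_PS (mem_PS.mp hpPS)
    refine ⟨Q, hQ, ?_⟩
    rcases hor with he | he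
    · rw [← he]
      exact hsupp
    · have : h i * Q = -pauliOp p := by
        rw [he, neg_neg]
      rw [this]
      exact supp_neg hsupp
  -- (F4) count if delta
  have F4 : ∀ i, del i → (Si i).card = N := by
    intro i hdi
    obtain ⟨Q₀, hQ₀, hM₀supp⟩ := hdi
    obtain ⟨⟨s₀, hs₀⟩, -⟩ := rep_pm hψ (hherm i) hQ₀ (hnz i)
    have hM₀sq : (h i * Q₀) * (h i * Q₀) = 1 := pm_sq hs₀
    have hQ₀sq : Q₀ * Q₀ = 1 := stab_sq hψ hQ₀
    have hHsq : h i * h i = 1 := herm_sq (hherm i)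
    have hcomm : Q₀ * h i = h i * Q₀ := by
      have h2 : Q₀ * (h i * Q₀) = h i := by
        have h3 := congrArg (fun X => h i * X) hM₀sq
        simp only [Matrix.mul_one] at h3
        calc Q₀ * (h i * Q₀) = 1 * (Q₀ * (h i * Q₀)) := by rw [Matrix.one_mul]
          _ = (h i * h i) * (Q₀ * (h i * Q₀)) := by rw [hHsq]
          _ = h i * ((h i * Q₀) * (h i * Q₀)) := by
              rw [Matrix.mul_assoc, Matrix.mul_assoc]
          _ = h i := by rw [hM₀sq, Matrix.mul_one]
      calc Q₀ * h i = Q₀ * (h i * Q₀) * Q₀ := by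
            rw [Matrix.mul_assoc, Matrix.mul_assoc, hQ₀sq, Matrix.mul_one]
        _ = h i * Q₀ := by rw [h2]
    -- the string extraction map
    set Φ : QMat n → (Fin n → Fin 4) := fun M =>
      if hM : ∃ s, (h i * Q₀) * M = pauliOp s ∨ (h i * Q₀) * M = -pauliOp s
      then Classical.choose hM else fun _ => 0 with hΦdef
    have hΦ : ∀ (M : QMat n)
        (hM : ∃ s, (h i * Q₀) * M = pauliOp s ∨ (h i * Q₀) * M = -pauliOp s),
        (h i * Q₀) * M = pauliOp (Φ M) ∨ (h i * Q₀) * M = -pauliOp (Φ M) := by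
      intro M hM
      rw [hΦdef]
      simp only [dif_pos hM]
      exact Classical.choose_spec hM
    have hex : ∀ M ∈ (stab_finite ψ A).toFinset,
        ∃ s, (h i * Q₀) * M = pauliOp s ∨ (h i * Q₀) * M = -pauliOp s := by
      intro M hM
      rw [Set.Finite.mem_toFinset] at hM
      have hQM : Q₀ * M ∈ stabGroup ψ := stab_mul hψ hQ₀ hM.1
      obtain ⟨⟨s, hs⟩, -⟩ := rep_pm hψ (hherm i) hQM (hnz i)
      rw [← Matrix.mul_assoc] at hs
      exact ⟨s, hs⟩
    have him : (stab_finite ψ A).toFinset.image Φ = Si i := by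
      apply Finset.ext
      intro p
      constructor
      · intro hp
        obtain ⟨M, hM, rfl⟩ := Finset.mem_image.mp hp
        have hMloc := (Set.Finite.mem_toFinset _).mp hM
        have hΦM := hΦ M (hex M hM)
        have hsuppM0M : MatSupportedOn A ((h i * Q₀) * M) := supp_mul hM₀supp hMloc.2
        rw [Finset.mem_filter]
        constructor
        · rw [mem_PS]
          apply supp_pauliOp_str (w := (1:ℂ)) one_ne_zero
          rw [one_smul]
          rcases hΦM with he | he
          · rw [← he]
            exact hsuppM0M
          · have : pauliOp (Φ M) = -((h i * Q₀) * M) := by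
              rw [he, neg_neg]
            rw [this]
            exact supp_neg hsuppM0M
        · refine ⟨Q₀ * M, stab_mul hψ hQ₀ hMloc.1, ?_⟩
          rw [← Matrix.mul_assoc]
          rcases hΦM with he | he
          · left
            rw [he]
          · right
            rw [he, neg_neg]
      · intro hp
        obtain ⟨hpPS, Q, hQ, hor⟩ := Finset.mem_filter.mp hp
        have hsuppP : MatSupportedOn A (pauliOp p) :=
          supp_pauliOp_of_mem_PS (mem_PS.mp hpPS)
        have hcalc : (h i * Q₀) * (h i * Q) = Q₀ * Q := by
          calc (h i * Q₀) * (h i * Q) = h i * (Q₀ * h i) * Q := by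
                rw [Matrix.mul_assoc, Matrix.mul_assoc, Matrix.mul_assoc]
            _ = h i * (h i * Q₀) * Q := by rw [hcomm]
            _ = (h i * h i) * (Q₀ * Q) := by
                rw [Matrix.mul_assoc, Matrix.mul_assoc, Matrix.mul_assoc]
            _ = Q₀ * Q := by rw [hHsq, Matrix.one_mul]
        have hQ' : Q₀ * Q ∈ stabGroup ψ := stab_mul hψ hQ₀ hQ
        have hQ'supp : MatSupportedOn A (Q₀ * Q) := by
          rcases hor with he | he
          · have : Q₀ * Q = (h i * Q₀) * pauliOp p := by rw [he, hcalc]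
            rw [this]
            exact supp_mul hM₀supp hsuppP
          · have : Q₀ * Q = -((h i * Q₀) * pauliOp p) := by
              rw [he, Matrix.mul_neg, neg_neg, hcalc]
            rw [this]
            exact supp_neg (supp_mul hM₀supp hsuppP)
        have hQ'mem : Q₀ * Q ∈ (stab_finite ψ A).toFinset := by
          rw [Set.Finite.mem_toFinset]
          exact ⟨hQ', hQ'supp⟩
        have hM0Q' : (h i * Q₀) * (Q₀ * Q) = h i * Q := by
          calc (h i * Q₀) * (Q₀ * Q) = h i * (Q₀ * Q₀) * Q := by
                rw [Matrix.mul_assoc, Matrix.mul_assoc, Matrix.mul_assoc]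
            _ = h i * Q := by rw [hQ₀sq, Matrix.mul_one]
        have h1 : (h i * Q₀) * (Q₀ * Q) = pauliOp p ∨ (h i * Q₀) * (Q₀ * Q) = -pauliOp p := by
          rcases hor with he | he
          · left
            rw [hM0Q', he]
          · right
            rw [hM0Q', he, neg_neg]
        rw [Finset.mem_image]
        exact ⟨Q₀ * Q, hQ'mem, (pm_eq_str (hΦ _ ⟨p, h1⟩) h1)⟩
    have hinj : Set.InjOn Φ ((stab_finite ψ A).toFinset : Set (QMat n)) := by
      intro M hM M' hM' hΦeq
      have hΦM := hΦ M (hex M hM)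
      have hΦM' := hΦ M' (hex M' hM')
      rw [hΦeq] at hΦM
      have hMloc := (Set.Finite.mem_toFinset _).mp hM
      have hM'loc := (Set.Finite.mem_toFinset _).mp hM'
      have hMM' : (h i * Q₀) * M = (h i * Q₀) * M'
          ∨ (h i * Q₀) * M = -((h i * Q₀) * M') := by
        rcases hΦM with he | he <;> rcases hΦM' with he' | he'
        · left
          rw [he, he']
        · right
          rw [he, he', neg_neg]
        · right
          rw [he, he']
        · left
          rw [he, he']
      have hcancel : ∀ X : QMat n, (h i * Q₀) * ((h i * Q₀) * X) = X := by
        intro X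
        rw [← Matrix.mul_assoc, hM₀sq, Matrix.one_mul]
      rcases hMM' with he | he
      · calc M = (h i * Q₀) * ((h i * Q₀) * M) := (hcancel M).symm
          _ = (h i * Q₀) * ((h i * Q₀) * M') := by rw [he]
          _ = M' := hcancel M'
      · exfalso
        have : M = -M' := by
          calc M = (h i * Q₀) * ((h i * Q₀) * M) := (hcancel M).symm
            _ = (h i * Q₀) * (-((h i * Q₀) * M')) := by rw [he]
            _ = -((h i * Q₀) * ((h i * Q₀) * M')) := by rw [Matrix.mul_neg]
            _ = -M' := by rw [hcancel M']
        apply stab_not_neg hψ hM'loc.1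
        rw [← this]
        exact hMloc.1
    rw [← him, Finset.card_image_of_injOn hinj, hN,
      Set.ncard_eq_toFinset_card _ (stab_finite ψ A)]
  -- (F5) assemble
  have hzero : ∀ p ∈ (PS A).filter (fun p => ¬ ∃ i, cond i p), F p = 0 := by
    intro p hp
    rw [Finset.mem_filter] at hp
    obtain ⟨hpPS, hnex⟩ := hp
    have htr : Matrix.trace (pauliOp p * dm ψ) = 0 := by
      by_contra htr
      obtain ⟨i, Q, hQ, hor⟩ := hcomplete (pauliOp p)
        ⟨1, p, Or.inl rfl, (one_smul _ _).symm⟩ htr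
      exact hnex ⟨i, Q, hQ, hor⟩
    rw [hF]
    simp only
    rw [htr, zero_mul]
  have hsplit := Finset.sum_filter_add_sum_filter_not (PS A) (fun p => ∃ i, cond i p) F
  rw [← hsplit, Finset.sum_eq_zero hzero, add_zero]
  have hbiun : (PS A).filter (fun p => ∃ i, cond i p) = Finset.univ.biUnion Si := by
    apply Finset.ext
    intro p
    rw [Finset.mem_filter, Finset.mem_biUnion]
    constructor
    · rintro ⟨h1, i, h2⟩
      exact ⟨i, Finset.mem_univ i, Finset.mem_filter.mpr ⟨h1, h2⟩⟩
    · rintro ⟨i, -, h2⟩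
      rw [Finset.mem_filter] at h2
      exact ⟨h2.1, i, h2.2⟩
  rw [hbiun, Finset.sum_biUnion (fun i _ j _ hne => F2 i j hne)]
  have hsum : ∀ i : Fin (k + 1), ∑ p ∈ Si i, F p
      = (if del i then ((N:ℝ):ℂ) * ((((Matrix.trace (h i * dm ψ)).re)^2 : ℝ):ℂ) else 0) := by
    intro i
    by_cases hdi : del i
    · rw [if_pos hdi, Finset.sum_congr rfl (F1 i), Finset.sum_const, F4 i hdi,
        nsmul_eq_mul]
      norm_cast
    · rw [if_neg hdi, F3 i hdi, Finset.sum_empty]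
  rw [Finset.sum_congr rfl (fun i _ => hsum i)]
  have hpull : ∀ i : Fin (k + 1),
      (if del i then ((N:ℝ):ℂ) * ((((Matrix.trace (h i * dm ψ)).re)^2 : ℝ):ℂ) else 0)
      = ((N:ℝ):ℂ) * (((if del i then ((Matrix.trace (h i * dm ψ)).re)^2 else 0 : ℝ)):ℂ) := by
    intro i
    by_cases hdi : del i <;> simp [hdi]
  rw [Finset.sum_congr rfl (fun i _ => hpull i), ← Finset.mul_sum]
  congr 1
  norm_cast

lemma trace_dm {ψ : QVec n} (hψ : IsUnitVec ψ) : Matrix.trace (dm ψ) = 1 := by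
  rw [Matrix.trace]
  have hdiag : ∀ x, Matrix.diag (dm ψ) x = ((Complex.normSq (ψ x) : ℝ) : ℂ) := by
    intro x
    simp [dm, Matrix.vecMulVec_apply, Matrix.diag, Complex.star_def, Complex.mul_conj]
  rw [Finset.sum_congr rfl fun x _ => hdiag x]
  norm_cast

end St3
end

noncomputable section

/-- exact 2-Rényi entanglement entropy:
`S₂(ψ_A) = (n_A − |S_A|) − log₂ Σ_i δ_i Tr(h_i ψ)²`. -/
theorem statement3 (n k : ℕ) (ψ : QVec n) (hψ : IsUnitVec ψ)
    (A : Finset (Fin n))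
    (h : Fin (k + 1) → QMat n)
    (h0 : h 0 = 1)
    (hherm : ∀ i, IsHermPauli (h i))
    (hnz : ∀ i, Matrix.trace (h i * dm ψ) ≠ 0)
    (hdistinct : ∀ i j, i ≠ j → ∀ P ∈ stabGroup ψ, h i ≠ h j * P ∧ h i ≠ -(h j * P))
    (hcomplete : ∀ P : QMat n, IsHermPauli P → Matrix.trace (P * dm ψ) ≠ 0 →
      ∃ i, ∃ Q ∈ stabGroup ψ, P = h i * Q ∨ P = -(h i * Q)) :
    -Real.logb 2 (Matrix.trace (reducedDM A ψ * reducedDM A ψ)).re =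
      ((A.card : ℝ) - logCard (localStab ψ A)) -
        Real.logb 2 (∑ i, if ∃ P ∈ stabGroup ψ, MatSupportedOn A (h i * P)
          then ((Matrix.trace (h i * dm ψ)).re) ^ 2 else 0) := by
  classical
  simp only [logCard]
  set T := Matrix.trace (reducedDM A ψ * reducedDM A ψ) with hT
  set N : ℕ := (localStab ψ A).ncard with hN
  set S : ℝ := ∑ i, if ∃ P ∈ stabGroup ψ, MatSupportedOn A (h i * P)
      then ((Matrix.trace (h i * dm ψ)).re) ^ 2 else 0 with hS
  have hpur := St3.purity_expansion A ψ
  have hmas := St3.master hψ A h hherm hnz hdistinct hcomplete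
  have key : (2:ℂ)^A.card * T = ((N:ℝ):ℂ) * ((S:ℝ):ℂ) := by
    rw [hpur, hmas]
  -- S ≥ 1
  have hterm0 : (if ∃ P ∈ stabGroup ψ, MatSupportedOn A (h 0 * P)
      then ((Matrix.trace (h 0 * dm ψ)).re) ^ 2 else 0) = 1 := by
    rw [if_pos ⟨1, St3.stab_one, by rw [h0, Matrix.mul_one]; exact St3.supp_one⟩,
      h0, Matrix.one_mul, St3.trace_dm hψ]
    norm_num
  have hS1 : 1 ≤ S := by
    rw [hS, ← hterm0]
    refine Finset.single_le_sum (f := fun i : Fin (k + 1) =>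
      if ∃ P ∈ stabGroup ψ, MatSupportedOn A (h i * P)
        then ((Matrix.trace (h i * dm ψ)).re) ^ 2 else 0)
      (fun i _ => ?_) (Finset.mem_univ (0 : Fin (k + 1)))
    split
    · exact sq_nonneg _
    · exact le_refl 0
  have hSpos : 0 < S := lt_of_lt_of_le one_pos hS1
  -- N ≥ 1
  have hne : (localStab ψ A).Nonempty := ⟨1, St3.stab_one, St3.supp_one⟩
  have hNpos : 0 < N := (Set.ncard_pos (St3.stab_finite ψ A)).mpr hne
  have hNpos' : (0:ℝ) < N := by exact_mod_cast hNpos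
  -- value of T.re
  have h2c : ((2:ℂ))^A.card ≠ 0 := pow_ne_zero _ two_ne_zero
  have hTval : T = ((((N:ℝ) * S) / 2^A.card : ℝ) : ℂ) := by
    have hdiv : T = (((N:ℝ):ℂ) * ((S:ℝ):ℂ)) / (2:ℂ)^A.card := by
      rw [eq_div_iff h2c, mul_comm]
      exact key
    rw [hdiv]
    push_cast
    ring
  have hTre : T.re = ((N:ℝ) * S) / 2^A.card := by
    rw [hTval, Complex.ofReal_re]
  rw [hTre]
  have hNne : ((N:ℝ)) ≠ 0 := ne_of_gt hNpos'
  have hSne : S ≠ 0 := ne_of_gt hSpos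
  have h2cr : ((2:ℝ)^A.card) ≠ 0 := pow_ne_zero _ two_ne_zero
  rw [Real.logb_div (mul_ne_zero hNne hSne) h2cr, Real.logb_mul hNne hSne,
    Real.logb_pow]
  have hlog2 : Real.logb 2 2 = 1 := by
    simp [Real.logb_self_eq_one]
  rw [hlog2]
  ring


end
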